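/- There exists an n-Smullyan model which satisfies both F-Tarski (there is no M-predicate H with Φ(H) = False_M) and T-Tarski (there is no M-predicate H with Φ(H) = True_M), but satisfies neither F-Tarski+ (there is no M-predicate H such that False_M^+ = Φ(H) ∩ Sent_M^+) nor T-Tarski+ (there is no M-predicate H such that True_M^+ = Φ(H) ∩ Sent_M^+). Concretely, the simple model with Σ = {n, ♯} and Φ(♯) = {X ∈ Σ* : the number of occurrences of n in X is even}, which is an n-Smullyan model, is such a model. -/

import Mathlib

/-- A Smullyan model over a set of symbols `α`: a set `pred` of predicates
(finite strings over `α`) satisfying the prefix-freeness requirement (†), together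
with a naming function `phi` assigning a set of strings to each string
(only its values on `pred` are relevant). -/
structure SmullyanModel (α : Type) where
  pred : Set (List α)
  prefixFree : ∀ H ∈ pred, ∀ X : List α, X ≠ [] → H ++ X ∉ pred
  phi : List α → Set (List α)

namespace SmullyanModel

variable {α : Type} (M : SmullyanModel α)

/-- The set of `M`-sentences: strings of the form `H ++ X` with `H` a predicate. -/
def sent : Set (List α) := {S | ∃ H ∈ M.pred, ∃ X : List α, S = H ++ X}

/-- `Sent_M^+ = Sent_M \ Pred_M`. -/
def sentPlus : Set (List α) := M.sent \ M.pred

/-- `True_M`: the set of true `M`-sentences. -/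
def trueSet : Set (List α) := {S | ∃ H ∈ M.pred, ∃ X ∈ M.phi H, S = H ++ X}

/-- `True_M^+ = True_M \ Pred_M`. -/
def truePlus : Set (List α) := M.trueSet \ M.pred

/-- `False_M = Sent_M \ True_M`. -/
def falseSet : Set (List α) := M.sent \ M.trueSet

/-- `False_M^+ = Sent_M^+ \ True_M^+`. -/
def falsePlus : Set (List α) := M.sentPlus \ M.truePlus

/-- `M ⊨ S`. -/
def Sat (S : List α) : Prop := S ∈ M.trueSet

/-- `S ∈ Sent_M^+` is an `M`-fixed point of `H` if `M ⊨ S ↔ M ⊨ HS`. -/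
def IsFixedPoint (H S : List α) : Prop :=
  S ∈ M.sentPlus ∧ (M.Sat S ↔ M.Sat (H ++ S))

/-- `M` is an `n`-Smullyan model (with negation symbol `n : α`):
for every predicate `H`, `nH` is a predicate and `Φ(nH) = Σ* \ Φ(H)`. -/
def IsNModel (n : α) : Prop :=
  ∀ H ∈ M.pred, (n :: H) ∈ M.pred ∧ M.phi (n :: H) = {X : List α | X ∉ M.phi H}

/-- `M` is an `r`-Smullyan model (with repeat symbol `r : α`):
for every predicate `H`, `rH` is a predicate and `Φ(rH) = {K ∈ Pred : KK ∈ Φ(H)}`. -/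
def IsRModel (r : α) : Prop :=
  ∀ H ∈ M.pred, (r :: H) ∈ M.pred ∧
    M.phi (r :: H) = {K : List α | K ∈ M.pred ∧ K ++ K ∈ M.phi H}

/-- FPT: every `M`-predicate has an `M`-fixed point. -/
def FPT : Prop := ∀ H ∈ M.pred, ∃ S : List α, M.IsFixedPoint H S

/-- T-Tarski: no `M`-predicate names `True_M`. -/
def TTarski : Prop := ¬ ∃ H ∈ M.pred, M.phi H = M.trueSet

/-- F-Tarski: no `M`-predicate names `False_M`. -/
def FTarski : Prop := ¬ ∃ H ∈ M.pred, M.phi H = M.falseSet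

/-- T-Tarski⁺: there is no `M`-predicate `H` with `True_M⁺ = Φ(H) ∩ Sent_M⁺`. -/
def TTarskiPlus : Prop := ¬ ∃ H ∈ M.pred, M.truePlus = M.phi H ∩ M.sentPlus

/-- F-Tarski⁺: there is no `M`-predicate `H` with `False_M⁺ = Φ(H) ∩ Sent_M⁺`. -/
def FTarskiPlus : Prop := ¬ ∃ H ∈ M.pred, M.falsePlus = M.phi H ∩ M.sentPlus

/-- mG1. -/
def MG1 : Prop :=
  ∀ H ∈ M.pred, M.phi H ⊆ M.trueSet →
    ∃ S ∈ M.sent, M.Sat S ∧ S ∉ M.phi H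

/-- mG1⁺. -/
def MG1Plus : Prop :=
  ∀ H ∈ M.pred, M.phi H ∩ M.sentPlus ⊆ M.truePlus →
    ∃ S ∈ M.sentPlus, M.Sat S ∧ S ∉ M.phi H

/-- G1 (for `n`-Smullyan models). -/
def G1 (n : α) : Prop :=
  ∀ H ∈ M.pred, M.phi H ⊆ M.trueSet →
    ∃ S ∈ M.sent, S ∉ M.phi H ∧ (n :: S) ∉ M.phi H

/-- G1⁺ (for `n`-Smullyan models). -/
def G1Plus (n : α) : Prop :=
  ∀ H ∈ M.pred, M.phi H ∩ M.sentPlus ⊆ M.truePlus →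
    ∃ S ∈ M.sentPlus, S ∉ M.phi H ∧ (n :: S) ∉ M.phi H

/-- The predicate set of a simple model: strings `X♯` where `X` contains no `♯`. -/
def simplePred (sharp : α) : Set (List α) :=
  {L | ∃ X : List α, sharp ∉ X ∧ L = X ++ [sharp]}

end SmullyanModel

inductive SmSym where
  | n
  | sharp
deriving DecidableEq


namespace Stmt15Aux

abbrev cnt (L : List SmSym) : ℕ := L.count SmSym.n

def Msimple : SmullyanModel SmSym where
  pred := SmullyanModel.simplePred SmSym.sharp
  prefixFree := by
    rintro H ⟨X, hX, rfl⟩ Y hY ⟨Z, hZ, hEq⟩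
    rcases Y.eq_nil_or_concat with rfl | ⟨Y', y, rfl⟩
    · exact hY rfl
    · have h2 : (X ++ [SmSym.sharp] ++ Y') ++ [y] = Z ++ [SmSym.sharp] := by
        simpa [List.concat_eq_append, List.append_assoc] using hEq
      obtain ⟨h3, _⟩ := List.append_inj' h2 rfl
      apply hZ
      rw [← h3]; simp
  phi := fun H => {X | Even (X.count SmSym.n + H.count SmSym.n)}

lemma sharp_mem_of_sent {S : List SmSym} (hS : S ∈ Msimple.sent) :
    SmSym.sharp ∈ S := by
  obtain ⟨H, ⟨X, _, rfl⟩, Y, rfl⟩ := hS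
  simp

lemma true_iff {S : List SmSym} :
    S ∈ Msimple.trueSet ↔ S ∈ Msimple.sent ∧ Even (cnt S) := by
  constructor
  · rintro ⟨H, hH, X, hX, rfl⟩
    refine ⟨⟨H, hH, X, rfl⟩, ?_⟩
    have hX' : Even (X.count SmSym.n + H.count SmSym.n) := hX
    simp only [cnt, List.count_append]
    rw [Nat.even_iff] at hX' ⊢; omega
  · rintro ⟨⟨H, hH, X, rfl⟩, hev⟩
    refine ⟨H, hH, X, ?_, rfl⟩
    show Even (X.count SmSym.n + H.count SmSym.n)
    simp only [cnt, List.count_append] at hev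
    rw [Nat.even_iff] at hev ⊢; omega

lemma not_pred_no_sharp {S : List SmSym} (h : SmSym.sharp ∉ S) :
    S ∉ Msimple.pred := by
  rintro ⟨X, _, rfl⟩
  simp at h

end Stmt15Aux

/-- There is an `n`-simple model (Σ = {n, ♯}, Φ(♯) = {X : the number of occurrences
of n in X is even}) satisfying both F-Tarski and T-Tarski but neither F-Tarski⁺ nor
T-Tarski⁺. -/
theorem stmt_15 :
    ∃ M : SmullyanModel SmSym,
      M.pred = SmullyanModel.simplePred SmSym.sharp ∧
      M.IsNModel SmSym.n ∧
      M.phi [SmSym.sharp] = {X : List SmSym | Even (X.count SmSym.n)} ∧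
      M.FTarski ∧
      M.TTarski ∧
      ¬ M.FTarskiPlus ∧
      ¬ M.TTarskiPlus := by
  open Stmt15Aux in
  refine ⟨Msimple, rfl, ?_, ?_, ?_, ?_, ?_, ?_⟩
  · -- IsNModel
    rintro H ⟨X, hX, rfl⟩
    constructor
    · exact ⟨SmSym.n :: X, by simpa using hX, rfl⟩
    · ext Y
      show Even (Y.count SmSym.n + (SmSym.n :: (X ++ [SmSym.sharp])).count SmSym.n) ↔
        ¬ Even (Y.count SmSym.n + (X ++ [SmSym.sharp]).count SmSym.n)
      simp only [List.count_cons_self]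
      rw [Nat.even_iff, Nat.even_iff]
      omega
  · -- phi [♯]
    ext Y; simp [Msimple]
  · -- FTarski
    rintro ⟨H, hH, hphi⟩
    rcases Nat.even_or_odd (cnt H) with he | ho
    · have : ([] : List SmSym) ∈ Msimple.phi H := by
        simpa [Msimple, cnt] using he
      rw [hphi] at this
      exact absurd (sharp_mem_of_sent this.1) (by simp)
    · have : [SmSym.n] ∈ Msimple.phi H := by
        show Even ([SmSym.n].count SmSym.n + H.count SmSym.n)
        rw [Nat.odd_iff] at ho
        simp only [cnt, List.count_cons_self, List.count_nil] at *
        rw [Nat.even_iff]; omega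
      rw [hphi] at this
      exact absurd (sharp_mem_of_sent this.1) (by simp)
  · -- TTarski
    rintro ⟨H, hH, hphi⟩
    rcases Nat.even_or_odd (cnt H) with he | ho
    · have : ([] : List SmSym) ∈ Msimple.phi H := by
        simpa [Msimple, cnt] using he
      rw [hphi] at this
      exact absurd (sharp_mem_of_sent (true_iff.mp this).1) (by simp)
    · have : [SmSym.n] ∈ Msimple.phi H := by
        show Even ([SmSym.n].count SmSym.n + H.count SmSym.n)
        rw [Nat.odd_iff] at ho
        simp only [cnt, List.count_cons_self, List.count_nil] at *
        rw [Nat.even_iff]; omega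
      rw [hphi] at this
      exact absurd (sharp_mem_of_sent (true_iff.mp this).1) (by simp)
  · -- ¬ FTarskiPlus
    intro h
    apply h
    refine ⟨[SmSym.n, SmSym.sharp], ⟨[SmSym.n], by simp, rfl⟩, ?_⟩
    ext S
    simp only [SmullyanModel.falsePlus, SmullyanModel.sentPlus, SmullyanModel.truePlus,
      Set.mem_diff, Set.mem_inter_iff]
    constructor
    · rintro ⟨⟨hs, hp⟩, ht⟩
      have hne : S ∉ Msimple.trueSet := fun h' => ht ⟨h', hp⟩
      have hodd : ¬ Even (cnt S) := fun h' => hne (true_iff.mpr ⟨hs, h'⟩)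
      refine ⟨?_, hs, hp⟩
      show Even (S.count SmSym.n + _)
      simpa [cnt, Nat.even_add_one] using hodd
    · rintro ⟨hph, hs, hp⟩
      have hodd : ¬ Even (cnt S) := by
        have : Even (S.count SmSym.n + 1) := by simpa [Msimple] using hph
        simpa [cnt, Nat.even_add_one] using this
      exact ⟨⟨hs, hp⟩, fun ⟨h', _⟩ => hodd (true_iff.mp h').2⟩
  · -- ¬ TTarskiPlus
    intro h
    apply h
    refine ⟨[SmSym.sharp], ⟨[], by simp, rfl⟩, ?_⟩
    ext S
    simp only [SmullyanModel.truePlus, SmullyanModel.sentPlus,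
      Set.mem_diff, Set.mem_inter_iff]
    constructor
    · rintro ⟨ht, hp⟩
      obtain ⟨hs, hev⟩ := true_iff.mp ht
      exact ⟨by simpa [Msimple, cnt] using hev, hs, hp⟩
    · rintro ⟨hph, hs, hp⟩
      have hev : Even (cnt S) := by simpa [Msimple, cnt] using hph
      exact ⟨true_iff.mpr ⟨hs, hev⟩, hp⟩
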